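/- Let D be an infinite set and Σ𝕋^D = {x ∈ 𝕋^D : x(d) = 1 for all but countably many d} be the Σ-product of circles, with the topology inherited from the product 𝕋^D. Then the Pontryagin dual of Σ𝕋^D (with the compact-open topology) is discrete. -/

import Mathlib

open Pointwise Function

noncomputable section

/-- The canonical evaluation homomorphism of a topological abelian group into its
Pontryagin bidual, `x ↦ (χ ↦ χ x)`. -/
noncomputable def pontryaginEval (G : Type*) [CommGroup G] [TopologicalSpace G]
    [IsTopologicalGroup G] : G →* PontryaginDual (PontryaginDual G) where
  toFun x :=
    { toFun := fun χ => χ x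
      map_one' := rfl
      map_mul' := fun _ _ => rfl
      continuous_toFun :=
        (continuous_eval_const (F := ContinuousMonoidHom G Circle) x :) }
  map_one' := ContinuousMonoidHom.ext fun χ => map_one χ
  map_mul' x y := ContinuousMonoidHom.ext fun χ => map_mul χ x y

/-- A topological group is protodiscrete (linear) if open subgroups form a
neighborhood base at the identity. -/
def Protodiscrete (G : Type*) [Group G] [TopologicalSpace G] : Prop :=
  ∀ U ∈ nhds (1 : G), ∃ V : Subgroup G, IsOpen (V : Set G) ∧ (V : Set G) ⊆ U

/-- A topological group is precompact (totally bounded) if every neighborhood of the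
identity has finitely many translates covering the group. -/
def Precompact (G : Type*) [Group G] [TopologicalSpace G] : Prop :=
  ∀ U ∈ nhds (1 : G), ∃ F : Finset G, ∀ x : G, ∃ f ∈ F, x ∈ f • U

/-- A topological abelian group is (Pontryagin) reflexive if the canonical evaluation
map into its bidual is a topological isomorphism. -/
def PontryaginReflexive (G : Type*) [CommGroup G] [TopologicalSpace G]
    [IsTopologicalGroup G] : Prop :=
  IsHomeomorph (pontryaginEval G)

/-- A subgroup is dually embedded if every continuous character of it extends to a
continuous character of the ambient group. -/
def DuallyEmbedded {G : Type*} [CommGroup G] [TopologicalSpace G] [IsTopologicalGroup G]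
    (L : Subgroup G) : Prop :=
  ∀ χ : PontryaginDual L, ∃ ψ : PontryaginDual G, ∀ x : L, ψ (x : G) = χ x

/-- The annihilator of a subset `K` of `G` in the dual group. -/
def annihilator {G : Type*} [CommGroup G] [TopologicalSpace G] [IsTopologicalGroup G]
    (K : Set G) : Subgroup (PontryaginDual G) where
  carrier := {χ | ∀ x ∈ K, χ x = 1}
  one_mem' := fun x _ => rfl
  mul_mem' := by
    intro a b ha hb x hx
    show a x * b x = 1
    rw [ha x hx, hb x hx, one_mul]
  inv_mem' := by
    intro a ha x hx
    show (a x)⁻¹ = 1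
    rw [ha x hx, inv_one]

/-- A `P`-space: every countable intersection of open sets is open. -/
def IsPSpace (X : Type*) [TopologicalSpace X] : Prop :=
  ∀ s : ℕ → Set X, (∀ n, IsOpen (s n)) → IsOpen (⋂ n, s n)

/-- A set is `Gδ`-dense if it meets every nonempty `Gδ`-set. -/
def GdeltaDense {X : Type*} [TopologicalSpace X] (s : Set X) : Prop :=
  ∀ t : ℕ → Set X, (∀ n, IsOpen (t n)) → (⋂ n, t n).Nonempty → (s ∩ ⋂ n, t n).Nonempty

/-- The graph of a homomorphism, as a subgroup of the product. -/
def graphSubgroup {H₁ H₂ : Type*} [CommGroup H₁] [CommGroup H₂] (φ : H₁ →* H₂) :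
    Subgroup (H₁ × H₂) where
  carrier := {p | p.2 = φ p.1}
  one_mem' := (map_one φ).symm
  mul_mem' := by
    rintro ⟨a, b⟩ ⟨c, d⟩ hb hd
    simp only [Set.mem_setOf_eq] at *
    simp [hb, hd]
  inv_mem' := by
    rintro ⟨a, b⟩ h
    simp only [Set.mem_setOf_eq] at *
    simp [h]

/-- The Σ-product of `D` copies of the circle group inside `𝕋^D`. -/
def sigmaProd (D : Type*) : Subgroup (D → Circle) where
  carrier := {x | {d | x d ≠ 1}.Countable}
  one_mem' := by simp
  mul_mem' := by
    intro a b ha hb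
    refine Set.Countable.mono ?_ (ha.union hb)
    intro d hd
    simp only [Set.mem_union, Set.mem_setOf_eq]
    by_contra h
    push_neg at h
    exact hd (by show a d * b d = 1; rw [h.1, h.2, one_mul])
  inv_mem' := by
    intro a ha
    refine Set.Countable.mono ?_ ha
    intro d hd
    simp only [Set.mem_setOf_eq] at *
    simpa [inv_eq_one] using hd

/-- The group of continuous `Circle`-valued functions on `Y`, as a subgroup of the
product `Y → Circle`; the subspace topology is the topology of pointwise convergence. -/
def Cp (Y : Type*) [TopologicalSpace Y] : Subgroup (Y → Circle) where
  carrier := {f | Continuous f}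
  one_mem' := continuous_const
  mul_mem' := fun hf hg => hf.mul hg
  inv_mem' := fun hf => hf.inv

/-- The one-point Lindelöfication of a discrete set `D`: the point `none` has the
co-countable sets as neighborhoods, all other points are isolated. -/
def Lind (D : Type*) := Option D

instance (D : Type*) : TopologicalSpace (Lind D) where
  IsOpen U := (none : Option D) ∈ U → {d : D | (some d : Option D) ∉ U}.Countable
  isOpen_univ := by intro _; exact Set.countable_empty.mono (fun d hd => hd trivial)
  isOpen_inter := by
    intro U V hU hV h
    refine Set.Countable.mono ?_ ((hU h.1).union (hV h.2))
    intro d hd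
    simp only [Set.mem_union, Set.mem_setOf_eq] at *
    by_contra hc
    push_neg at hc
    exact hd ⟨hc.1, hc.2⟩
  isOpen_sUnion := by
    intro S hS h
    obtain ⟨U, hUS, hU⟩ := h
    refine Set.Countable.mono ?_ (hS U hUS hU)
    intro d hd
    simp only [Set.mem_setOf_eq] at *
    exact fun hdU => hd ⟨U, hUS, hdU⟩

end

section aux14

open Complex Real

lemma aux14_exp_nat_mul (n : ℕ) (x : ℝ) : Circle.exp (n * x) = Circle.exp x ^ n := by
  induction n with
  | zero => simp
  | succ n ih =>
      rw [pow_succ, ← ih, ← Circle.exp_add, Nat.cast_succ]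
      ring_nf

lemma aux14_circle_eq_one (z : Circle) (h : ∀ n : ℕ, 0 < ((z ^ n : Circle) : ℂ).re) :
    z = 1 := by
  by_contra hz
  have hθ0 : Complex.arg z ≠ 0 := fun h0 =>
    hz (by rw [← Circle.exp_arg z, h0, Circle.exp_zero])
  set θ : ℝ := Complex.arg z with hθ
  have habs : |θ| ≤ π := Complex.abs_arg_le_pi z
  have hpos : 0 < |θ| := abs_pos.mpr hθ0
  set n : ℕ := ⌈(π / 2) / |θ|⌉₊ with hn
  have hle : (π / 2) / |θ| ≤ (n : ℝ) := Nat.le_ceil _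
  have h1 : π / 2 ≤ n * |θ| := by
    have := mul_le_mul_of_nonneg_right hle hpos.le
    rwa [div_mul_cancel₀ _ hpos.ne'] at this
  have h2 : (n : ℝ) * |θ| ≤ π + π / 2 := by
    have hlt : (n : ℝ) < (π / 2) / |θ| + 1 := Nat.ceil_lt_add_one (by positivity)
    have := mul_le_mul_of_nonneg_right hlt.le hpos.le
    rw [add_mul, div_mul_cancel₀ _ hpos.ne', one_mul] at this
    linarith
  have hre : ((z ^ n : Circle) : ℂ).re = Real.cos ((n : ℝ) * θ) := by
    have hz' : z ^ n = Circle.exp ((n : ℝ) * θ) := by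
      rw [aux14_exp_nat_mul, hθ, Circle.exp_arg]
    rw [hz', Circle.coe_exp]
    exact Complex.exp_ofReal_mul_I_re _
  have hcos : Real.cos ((n : ℝ) * θ) ≤ 0 := by
    have he : Real.cos ((n : ℝ) * θ) = Real.cos ((n : ℝ) * |θ|) := by
      rw [← Real.cos_abs, abs_mul, Nat.abs_cast]
    rw [he]
    exact Real.cos_nonpos_of_pi_div_two_le_of_le h1 h2
  have := h n
  rw [hre] at this
  linarith

def aux14_C (D : Type*) : Set (D → Circle) :=
  {g | ∀ d₁ d₂ : D, g d₁ ≠ 1 → g d₂ ≠ 1 → d₁ = d₂}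

lemma aux14_C_closed (D : Type*) : IsClosed (aux14_C D) := by
  have heq : aux14_C D = ⋂ (d₁ : D) (d₂ : D),
      ({g : D → Circle | g d₁ = 1} ∪ {g | g d₂ = 1} ∪ {g | d₁ = d₂}) := by
    ext g
    simp only [aux14_C, Set.mem_setOf_eq, Set.mem_iInter, Set.mem_union]
    constructor
    · intro h d₁ d₂
      by_cases h1 : g d₁ = 1
      · exact Or.inl (Or.inl h1)
      by_cases h2 : g d₂ = 1
      · exact Or.inl (Or.inr h2)
      · exact Or.inr (h d₁ d₂ h1 h2)
    · intro h d₁ d₂ h1 h2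
      rcases h d₁ d₂ with (h' | h') | h'
      exacts [absurd h' h1, absurd h' h2, h']
  rw [heq]
  refine isClosed_iInter fun d₁ => isClosed_iInter fun d₂ => IsClosed.union (IsClosed.union ?_ ?_) ?_
  · exact isClosed_eq (continuous_apply d₁) continuous_const
  · exact isClosed_eq (continuous_apply d₂) continuous_const
  · by_cases h : d₁ = d₂
    · have : {g : D → Circle | d₁ = d₂} = Set.univ := by ext g; simp [h]
      rw [this]; exact isClosed_univ
    · have : {g : D → Circle | d₁ = d₂} = ∅ := by ext g; simp [h]
      rw [this]; exact isClosed_empty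

lemma aux14_single_mem_C {D : Type*} [DecidableEq D] (d : D) (x : Circle) :
    Pi.mulSingle d x ∈ aux14_C D := by
  intro d₁ d₂ h1 h2
  have e1 : d₁ = d := by
    by_contra h
    exact h1 (Pi.mulSingle_eq_of_ne (M := fun _ : D => Circle) h x)
  have e2 : d₂ = d := by
    by_contra h
    exact h2 (Pi.mulSingle_eq_of_ne (M := fun _ : D => Circle) h x)
  rw [e1, e2]

noncomputable def aux14_e (D : Type*) [DecidableEq D] (d : D) : Circle →* sigmaProd D :=
  (MonoidHom.mulSingle (fun _ : D => Circle) d).codRestrict (sigmaProd D) (fun x => by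
    show {d' | Pi.mulSingle (M := fun _ : D => Circle) d x d' ≠ 1}.Countable
    refine Set.Countable.mono ?_ (Set.countable_singleton d)
    intro d' hd'
    simp only [Set.mem_setOf_eq] at hd'
    simp only [Set.mem_singleton_iff]
    by_contra h
    exact hd' (Pi.mulSingle_eq_of_ne (M := fun _ : D => Circle) h x))

lemma aux14_e_val {D : Type*} [DecidableEq D] (d : D) (x : Circle) :
    ((aux14_e D d x : sigmaProd D) : D → Circle) = Pi.mulSingle d x := rfl

end aux14


/-- the Pontryagin dual of the Σ-product of circles is discrete. -/
theorem statement14 (D : Type*) [Infinite D] :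
    DiscreteTopology (PontryaginDual (sigmaProd D)) := by

  classical
  have hne : Nonempty D := inferInstance
  set V : Set Circle := {z | 0 < (z : ℂ).re} with hVdef
  have hVopen : IsOpen V :=
    isOpen_lt continuous_const (Complex.continuous_re.comp continuous_subtype_val)
  set K : Set (sigmaProd D) := Subtype.val ⁻¹' aux14_C D with hKdef
  have hCsub : aux14_C D ⊆ Set.range (Subtype.val : sigmaProd D → (D → Circle)) := by
    intro g hg
    refine ⟨⟨g, ?_⟩, rfl⟩
    show {d | g d ≠ 1}.Countable
    exact Set.Subsingleton.countable (fun d₁ h1 d₂ h2 => hg d₁ d₂ h1 h2)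
  have hKcomp : IsCompact K := by
    rw [Topology.IsEmbedding.subtypeVal.isCompact_iff]
    have himg : Subtype.val '' K = aux14_C D := by
      rw [hKdef, Set.image_preimage_eq_inter_range]
      exact Set.inter_eq_self_of_subset_left hCsub
    rw [himg]
    exact (aux14_C_closed D).isCompact
  rw [discreteTopology_iff_isOpen_singleton_one]
  have hset : {χ : PontryaginDual (sigmaProd D) | Set.MapsTo χ K V} = {1} := by
    ext χ
    simp only [Set.mem_setOf_eq, Set.mem_singleton_iff]
    constructor
    · intro hχ
      have hA : ∀ (d : D) (x : Circle), χ (aux14_e D d x) = 1 := by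
        intro d x
        refine aux14_circle_eq_one _ fun n => ?_
        have hmem : (aux14_e D d (x ^ n)) ∈ K := by
          show ((aux14_e D d (x ^ n) : sigmaProd D) : D → Circle) ∈ aux14_C D
          rw [aux14_e_val]
          exact aux14_single_mem_C d (x ^ n)
        have hv := hχ hmem
        rw [map_pow, map_pow] at hv
        exact hv
      have hB : ∀ y : sigmaProd D, χ y = 1 := by
        intro y
        have hprodval : ∀ F : Finset D,
            ((∏ d ∈ F, aux14_e D d (y.1 d) : sigmaProd D) : D → Circle)
              = ∏ d ∈ F, Pi.mulSingle d (y.1 d) := by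
          intro F
          rw [SubmonoidClass.coe_finset_prod]
          exact Finset.prod_congr rfl fun d _ => rfl
        have htd : Filter.Tendsto (fun F : Finset D => (∏ d ∈ F, aux14_e D d (y.1 d)))
            Filter.atTop (nhds y) := by
          rw [Topology.IsInducing.subtypeVal.tendsto_nhds_iff]
          refine tendsto_pi_nhds.2 fun d' => ?_
          refine Filter.Tendsto.congr' ?_ tendsto_const_nhds
          filter_upwards [Filter.eventually_ge_atTop ({d'} : Finset D)] with F hF
          have hd'F : d' ∈ F := Finset.singleton_subset_iff.mp hF
          have hps : (∏ c ∈ F, Pi.mulSingle c ((y : D → Circle) c) d') = (y : D → Circle) d' := by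
            rw [Finset.prod_eq_single d'
              (fun b _ hb => Pi.mulSingle_eq_of_ne (M := fun _ : D => Circle) (Ne.symm hb) _)
              (fun h => absurd hd'F h)]
            exact Pi.mulSingle_eq_same d' _
          show (y : D → Circle) d' = ((∏ d ∈ F, aux14_e D d ((y : D → Circle) d) : sigmaProd D) : D → Circle) d'
          rw [hprodval, Finset.prod_apply, hps]
        have hχprod : ∀ F : Finset D, χ (∏ d ∈ F, aux14_e D d (y.1 d)) = 1 := by
          intro F
          rw [map_prod]
          exact Finset.prod_eq_one fun d _ => hA d _
        have hcomp := (χ.continuous.tendsto y).comp htd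
        have h2 : Filter.Tendsto (fun _ : Finset D => (1 : Circle)) Filter.atTop (nhds (χ y)) :=
          hcomp.congr fun F => hχprod F
        exact (tendsto_nhds_unique h2 tendsto_const_nhds)
      exact ContinuousMonoidHom.ext hB
    · rintro rfl
      intro x _
      show (0 : ℝ) < ((1 : Circle) : ℂ).re
      norm_num
  rw [← hset]
  have hpre : {χ : PontryaginDual (sigmaProd D) | Set.MapsTo χ K V}
      = (ContinuousMonoidHom.toContinuousMap) ⁻¹'
          {f : C(sigmaProd D, Circle) | Set.MapsTo f K V} := rfl
  rw [hpre]
  exact (ContinuousMap.isOpen_setOf_mapsTo hKcomp hVopen).preimage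
    (ContinuousMonoidHom.isInducing_toContinuousMap _ _).continuous
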